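/- Let n ≥ 1 and let p, q : Fin n → ℝ be probability vectors (p i ≥ 0, q i ≥ 0, ∑_i p i = 1, ∑_i q i = 1) with p i > 0 for all i. Let x : Fin n → ℝ, set μ = ∑_i p i · x i, V = ∑_i p i · (x i − μ)², and M = max_i |x i − μ|, and assume M > 0. Let ε ≥ 0 and suppose the (natural-logarithm) Kullback–Leibler divergence satisfies ∑_i q i · Real.log (q i / p i) ≤ ε (terms with q i = 0 contributing 0). Then: if ε ≤ V / M², then ∑_i x i · (q i − p i) ≥ −2·√(V·ε); and if ε > V / M², then ∑_i x i · (q i − p i) ≥ −(V / M + M·ε). -/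

import Mathlib

open Finset Real

lemma exp_le_quad {t : ℝ} (h : |t| ≤ 1) : Real.exp t ≤ 1 + t + t ^ 2 := by
  have hb := Real.exp_bound h (n := 3) (by norm_num)
  have h1 : |t| ^ 3 ≤ |t| ^ 2 := by
    have := abs_nonneg t
    calc |t| ^ 3 = |t| ^ 2 * |t| := by ring
    _ ≤ |t| ^ 2 * 1 := by nlinarith [sq_abs t, abs_nonneg t]
    _ = |t| ^ 2 := by ring
  have hs : ∑ m ∈ range 3, t ^ m / (m.factorial : ℝ) = 1 + t + t ^ 2 / 2 := by
    norm_num [Finset.sum_range_succ]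
  rw [hs] at hb
  norm_num [Nat.factorial] at hb
  have h2 : |t| ^ 2 = t ^ 2 := sq_abs t
  have h3 := (abs_le.1 hb).2
  nlinarith

lemma dv (n : ℕ) (hn : 0 < n) (p q : Fin n → ℝ) (hp : ∀ i, 0 < p i) (hq : ∀ i, 0 ≤ q i)
    (hps : ∑ i, p i = 1) (hqs : ∑ i, q i = 1) (f : Fin n → ℝ) :
    ∑ i, q i * f i ≤ (∑ i, q i * Real.log (q i / p i)) + Real.log (∑ i, p i * Real.exp (f i)) := by
  haveI : Nonempty (Fin n) := ⟨⟨0, hn⟩⟩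
  set S := ∑ i, p i * Real.exp (f i) with hS
  have hSpos : 0 < S :=
    Finset.sum_pos (fun i _ => mul_pos (hp i) (Real.exp_pos _)) Finset.univ_nonempty
  have key : ∀ i, q i * f i - q i * Real.log (q i / p i) - q i * Real.log S
      ≤ p i * Real.exp (f i) / S - q i := by
    intro i
    rcases eq_or_lt_of_le (hq i) with h0 | h0
    · rw [← h0]
      simp only [zero_mul, sub_zero, zero_sub, neg_zero, sub_zero]
      have : 0 ≤ p i * Real.exp (f i) / S :=
        le_of_lt (div_pos (mul_pos (hp i) (Real.exp_pos _)) hSpos)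
      simpa using this
    · have hqi : 0 < q i := h0
      have ha : 0 < p i * Real.exp (f i) / (S * q i) :=
        div_pos (mul_pos (hp i) (Real.exp_pos _)) (mul_pos hSpos hqi)
      have hlog := Real.log_le_sub_one_of_pos ha
      have hexp : Real.log (p i * Real.exp (f i) / (S * q i))
          = Real.log (p i) + f i - Real.log S - Real.log (q i) := by
        rw [Real.log_div (ne_of_gt (mul_pos (hp i) (Real.exp_pos _)))
          (ne_of_gt (mul_pos hSpos hqi)), Real.log_mul (ne_of_gt (hp i))
          (ne_of_gt (Real.exp_pos _)), Real.log_mul (ne_of_gt hSpos) (ne_of_gt hqi),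
          Real.log_exp]
        ring
      rw [hexp] at hlog
      have hqp : Real.log (q i / p i) = Real.log (q i) - Real.log (p i) :=
        Real.log_div (ne_of_gt hqi) (ne_of_gt (hp i))
      have hmul := mul_le_mul_of_nonneg_left hlog (le_of_lt hqi)
      have heq : q i * (p i * Real.exp (f i) / (S * q i) - 1)
          = p i * Real.exp (f i) / S - q i := by
        field_simp
      rw [heq] at hmul
      calc q i * f i - q i * Real.log (q i / p i) - q i * Real.log S
          = q i * (Real.log (p i) + f i - Real.log S - Real.log (q i)) := by rw [hqp]; ring
        _ ≤ p i * Real.exp (f i) / S - q i := hmul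
  have hsum := Finset.sum_le_sum (fun i (_ : i ∈ Finset.univ) => key i)
  have hL : ∑ i, (q i * f i - q i * Real.log (q i / p i) - q i * Real.log S)
      = (∑ i, q i * f i) - (∑ i, q i * Real.log (q i / p i)) - Real.log S := by
    rw [Finset.sum_sub_distrib, Finset.sum_sub_distrib, ← Finset.sum_mul, hqs, one_mul]
  have hR : ∑ i, (p i * Real.exp (f i) / S - q i) = 0 := by
    rw [Finset.sum_sub_distrib, ← Finset.sum_div, ← hS, div_self (ne_of_gt hSpos), hqs]
    ring
  rw [hL, hR] at hsum
  linarith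

theorem stmt_14 (n : ℕ) (hn : 0 < n) (p q : Fin n → ℝ)
    (hp : ∀ i, 0 < p i) (hq : ∀ i, 0 ≤ q i)
    (hps : ∑ i, p i = 1) (hqs : ∑ i, q i = 1)
    (x : Fin n → ℝ) (μ V M : ℝ)
    (hμ : μ = ∑ i, p i * x i)
    (hV : V = ∑ i, p i * (x i - μ) ^ 2)
    (hM : M = ⨆ i, |x i - μ|)
    (hMpos : 0 < M)
    (ε : ℝ) (hε : 0 ≤ ε)
    (hKL : ∑ i, q i * Real.log (q i / p i) ≤ ε) :
    (ε ≤ V / M ^ 2 → -(2 * Real.sqrt (V * ε)) ≤ ∑ i, x i * (q i - p i)) ∧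
    (V / M ^ 2 < ε → -(V / M + M * ε) ≤ ∑ i, x i * (q i - p i)) := by
  haveI : Nonempty (Fin n) := ⟨⟨0, hn⟩⟩
  have hyM : ∀ i, |x i - μ| ≤ M := by
    intro i
    rw [hM]
    exact le_ciSup (f := fun i => |x i - μ|) (Set.Finite.bddAbove (Set.finite_range _)) i
  have hsum0 : ∑ i, p i * (x i - μ) = 0 := by
    simp only [mul_sub]
    rw [Finset.sum_sub_distrib, ← Finset.sum_mul, hps, one_mul, ← hμ]
    ring
  have hVnn : 0 ≤ V := by
    rw [hV]
    exact Finset.sum_nonneg fun i _ => mul_nonneg (le_of_lt (hp i)) (sq_nonneg _)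
  have hVpos : 0 < V := by
    rcases lt_or_eq_of_le hVnn with h | h
    · exact h
    · exfalso
      have hz : ∀ i ∈ Finset.univ, p i * (x i - μ) ^ 2 = 0 := by
        rw [hV] at h
        exact (Finset.sum_eq_zero_iff_of_nonneg
          (fun i _ => mul_nonneg (le_of_lt (hp i)) (sq_nonneg _))).1 h.symm
      have hy0 : ∀ i, x i - μ = 0 := by
        intro i
        have := hz i (Finset.mem_univ i)
        have := mul_eq_zero.1 this
        rcases this with h1 | h1
        · exact absurd h1 (ne_of_gt (hp i))
        · exact pow_eq_zero_iff (by norm_num) |>.1 h1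
      have : M ≤ 0 := by
        rw [hM]
        exact ciSup_le fun i => by rw [hy0 i]; simp
      linarith
  have hrw : ∑ i, x i * (q i - p i) = ∑ i, q i * (x i - μ) := by
    have h1 : ∑ i, x i * (q i - p i) = (∑ i, q i * x i) - (∑ i, p i * x i) := by
      simp only [mul_sub]
      rw [Finset.sum_sub_distrib]
      congr 1 <;> exact Finset.sum_congr rfl fun i _ => mul_comm _ _
    have h2 : ∑ i, q i * (x i - μ) = (∑ i, q i * x i) - μ := by
      simp only [mul_sub]
      rw [Finset.sum_sub_distrib, ← Finset.sum_mul, hqs, one_mul]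
    rw [h1, h2, ← hμ]
  have main_bound : ∀ lam : ℝ, 0 < lam → (∀ i, |x i - μ| ≤ lam) →
      -(lam * ε + V / lam) ≤ ∑ i, q i * (x i - μ) := by
    intro lam hlam hbd
    have hdv := dv n hn p q hp hq hps hqs (fun i => -(x i - μ) / lam)
    have hS_le : ∑ i, p i * Real.exp (-(x i - μ) / lam) ≤ 1 + V / lam ^ 2 := by
      have hterm : ∀ i ∈ Finset.univ, p i * Real.exp (-(x i - μ) / lam)
          ≤ p i * (1 + -(x i - μ) / lam + (-(x i - μ) / lam) ^ 2) := by
        intro i _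
        apply mul_le_mul_of_nonneg_left _ (le_of_lt (hp i))
        apply exp_le_quad
        rw [abs_div, abs_neg, abs_of_pos hlam]
        exact div_le_one_of_le₀ (hbd i) (le_of_lt hlam)
      calc ∑ i, p i * Real.exp (-(x i - μ) / lam)
          ≤ ∑ i, p i * (1 + -(x i - μ) / lam + (-(x i - μ) / lam) ^ 2) :=
            Finset.sum_le_sum hterm
        _ = (∑ i, p i) + (∑ i, p i * (x i - μ)) * (-(1 / lam))
            + (∑ i, p i * (x i - μ) ^ 2) * (1 / lam ^ 2) := by
            rw [Finset.sum_mul, Finset.sum_mul, ← Finset.sum_add_distrib,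
              ← Finset.sum_add_distrib]
            apply Finset.sum_congr rfl
            intro i _
            field_simp
        _ = 1 + V / lam ^ 2 := by rw [hps, hsum0, ← hV]; ring
    have hSpos : 0 < ∑ i, p i * Real.exp (-(x i - μ) / lam) :=
      Finset.sum_pos (fun i _ => mul_pos (hp i) (Real.exp_pos _)) Finset.univ_nonempty
    have hlog : Real.log (∑ i, p i * Real.exp (-(x i - μ) / lam)) ≤ V / lam ^ 2 := by
      have := Real.log_le_sub_one_of_pos hSpos
      linarith
    have hLHS : ∑ i, q i * (-(x i - μ) / lam) = -(∑ i, q i * (x i - μ)) / lam := by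
      have : ∑ i, q i * (-(x i - μ) / lam) = (∑ i, q i * (x i - μ)) * (-(1 / lam)) := by
        rw [Finset.sum_mul]
        apply Finset.sum_congr rfl
        intro i _
        field_simp
      rw [this]
      ring
    rw [hLHS] at hdv
    have hfinal : -(∑ i, q i * (x i - μ)) / lam ≤ ε + V / lam ^ 2 := by linarith
    have := (div_le_iff₀ hlam).1 hfinal
    have hexp : (ε + V / lam ^ 2) * lam = lam * ε + V / lam := by
      field_simp
    linarith [hexp ▸ this]
  rw [hrw]
  constructor
  · intro hcase
    rcases eq_or_lt_of_le hε with h0 | hεpos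
    · rw [← h0]
      simp only [mul_zero, Real.sqrt_zero, neg_zero]
      by_contra hcon
      push_neg at hcon
      have hc : 0 < -(∑ i, q i * (x i - μ)) := by linarith
      set c := -(∑ i, q i * (x i - μ)) with hcdef
      have : c ≤ c / 2 := by
        have hlam : (0:ℝ) < max M (V / (c / 2)) := lt_max_of_lt_left hMpos
        have hb := main_bound (max M (V / (c / 2))) hlam
          (fun i => le_max_of_le_left (hyM i))
        rw [← h0] at hb
        have hVd : V / max M (V / (c / 2)) ≤ c / 2 := by
          have h1 : V / (c / 2) ≤ max M (V / (c / 2)) := le_max_right _ _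
          have h2 : 0 < V / (c / 2) := div_pos hVpos (by linarith)
          calc V / max M (V / (c / 2)) ≤ V / (V / (c / 2)) :=
                div_le_div_of_nonneg_left hVnn h2 h1
            _ = c / 2 := by field_simp
        rw [mul_zero, zero_add] at hb
        linarith
      linarith
    · have hs2 : Real.sqrt (V * ε) ^ 2 = V * ε := Real.sq_sqrt (by positivity)
      set s := Real.sqrt (V * ε) with hsdef
      have hspos : 0 < s := Real.sqrt_pos.2 (by positivity)
      set lam := s / ε with hlamdef
      have hlampos : 0 < lam := div_pos hspos hεpos
      have hlamM : M ≤ lam := by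
        rw [hlamdef, le_div_iff₀ hεpos]
        rw [hsdef]
        rw [show M * ε = Real.sqrt ((M * ε) ^ 2) from
          (Real.sqrt_sq (by positivity)).symm]
        apply Real.sqrt_le_sqrt
        have hMe : M ^ 2 * ε ≤ V := by
          rw [le_div_iff₀ (by positivity)] at hcase
          linarith
        nlinarith
      have hb := main_bound lam hlampos (fun i => le_trans (hyM i) hlamM)
      have heq : lam * ε + V / lam = 2 * s := by
        have h1 : lam * ε = s := by
          rw [hlamdef]; field_simp
        have h2 : V / lam = s := by
          rw [hlamdef, div_div_eq_mul_div]
          rw [eq_comm, eq_div_iff (ne_of_gt hspos)]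
          nlinarith
        rw [h1, h2]; ring
      rw [heq] at hb
      exact hb
  · intro hcase
    linarith [main_bound M hMpos hyM]
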